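/- Let k > r ≥ 2 be integers and let m be a positive integer such that every r-partite r-graph satisfying the (r,k)-cover property has cover number at most m. Let G be a finite simple graph in which for every set S of at most k vertices there is a vertex v such that every vertex of S is adjacent to v or equal to v. Then for every edge-colouring of G with colours 1,…,r, the vertex set of G can be covered by at most m monochromatic components. Moreover, if every r-partite r-graph satisfying the (r,k)-cover property has a transversal cover, then V(G) can be covered by monochromatic components of pairwise distinct colours (at most one component of each colour). -/

import Mathlib

/-- A set of vertices `T` covers a hypergraph with edge family `E` if it meets every edge. -/
def IsCover {V : Type*} (E : Set (Set V)) (T : Set V) : Prop :=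
  ∀ e ∈ E, (e ∩ T).Nonempty

/-- The cover number of a hypergraph: minimum size of a cover. -/
noncomputable def coverNumber {V : Type*} (E : Set (Set V)) : ℕ :=
  sInf {n | ∃ T : Set V, T.ncard = n ∧ IsCover E T}

/-- The `(k,ℓ)`-cover property: any at most `k` edges have a cover of size at most `ℓ`. -/
def CoverProperty {V : Type*} (E : Set (Set V)) (k ℓ : ℕ) : Prop :=
  ∀ S ⊆ E, S.ncard ≤ k → ∃ T : Set V, T.ncard ≤ ℓ ∧ IsCover S T

/-- `E` is an `r`-partite `r`-graph w.r.t. the partition `part`. -/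
def IsPartite {V : Type*} (r : ℕ) (part : V → Fin r) (E : Set (Set V)) : Prop :=
  ∀ e ∈ E, ∀ i : Fin r, (e ∩ part ⁻¹' {i}).ncard = 1

/-- A transversal cover: a cover containing exactly one vertex from each part. -/
def IsTransversalCover {V : Type*} (r : ℕ) (part : V → Fin r) (E : Set (Set V))
    (T : Set V) : Prop :=
  IsCover E T ∧ ∀ i : Fin r, (T ∩ part ⁻¹' {i}).ncard = 1

/-- The `(r,k)`-cover property: any at most `k` edges have a transversal cover. -/
def PartiteCoverProperty {V : Type*} (r : ℕ) (part : V → Fin r) (E : Set (Set V))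
    (k : ℕ) : Prop :=
  ∀ S ⊆ E, S.ncard ≤ k → ∃ T : Set V, IsTransversalCover r part S T

/-- The spanning subgraph of `G` consisting of the edges of colour `i`. -/
def colorSubgraph {V : Type*} (G : SimpleGraph V) {r : ℕ} (c : Sym2 V → Fin r)
    (i : Fin r) : SimpleGraph V where
  Adj u v := G.Adj u v ∧ c s(u, v) = i
  symm := ⟨fun u v h => ⟨h.1.symm, by rw [Sym2.eq_swap]; exact h.2⟩⟩
  loopless := ⟨fun v h => G.irrefl h.1⟩

set_option linter.unusedSectionVars false
set_option linter.unusedVariables false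

section Aux
variable {VG : Type} [Fintype VG] [Nonempty VG] {r : ℕ}
  (G : SimpleGraph VG) (c : Sym2 VG → Fin r)

noncomputable def myRep (i : Fin r) (v : VG) : VG :=
  ((colorSubgraph G c i).connectedComponentMk v).out

noncomputable def myEdge (v : VG) : Set (Fin r × VG) :=
  Set.range (fun i => (i, myRep G c i v))

noncomputable def myE : Set (Set (Fin r × VG)) := Set.range (myEdge G c)

lemma myRep_reachable (i : Fin r) (v : VG) :
    (colorSubgraph G c i).Reachable (myRep G c i v) v := by
  apply SimpleGraph.ConnectedComponent.exact
  exact ((colorSubgraph G c i).connectedComponentMk v).out_eq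

lemma myRep_eq_of_reachable {i : Fin r} {u v : VG}
    (h : (colorSubgraph G c i).Reachable u v) : myRep G c i u = myRep G c i v := by
  unfold myRep
  rw [SimpleGraph.ConnectedComponent.sound h]

lemma myEdge_inter (v : VG) (i : Fin r) :
    myEdge G c v ∩ Prod.fst ⁻¹' {i} = {(i, myRep G c i v)} := by
  ext p
  constructor
  · rintro ⟨⟨j', rfl⟩, hj⟩
    simp only [Set.mem_preimage, Set.mem_singleton_iff] at hj
    subst hj
    rfl
  · intro h
    rw [Set.mem_singleton_iff] at h
    subst h
    exact ⟨⟨i, rfl⟩, rfl⟩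

lemma myE_partite : IsPartite r Prod.fst (myE G c) := by
  rintro e ⟨v, rfl⟩ i
  rw [myEdge_inter]
  exact Set.ncard_singleton _

lemma myEdge_self_transversal (w : VG) :
    ∀ i : Fin r, (myEdge G c w ∩ Prod.fst ⁻¹' {i}).ncard = 1 := fun i => by
  rw [myEdge_inter]; exact Set.ncard_singleton _

lemma myEdge_meets (hr : 0 < r) {u w : VG} (h : G.Adj u w ∨ u = w) :
    (myEdge G c u ∩ myEdge G c w).Nonempty := by
  rcases h with h | rfl
  · refine ⟨(c s(u, w), myRep G c (c s(u, w)) u), ⟨_, rfl⟩, ?_⟩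
    have : (colorSubgraph G c (c s(u, w))).Reachable u w :=
      SimpleGraph.Adj.reachable ⟨h, rfl⟩
    rw [myRep_eq_of_reachable G c this]
    exact ⟨_, rfl⟩
  · set i : Fin r := ⟨0, hr⟩
    exact ⟨(i, myRep G c i u), ⟨i, rfl⟩, ⟨i, rfl⟩⟩

lemma myE_coverProp (hr : 0 < r) (k : ℕ)
    (hG : ∀ S : Finset VG, S.card ≤ k → ∃ v : VG, ∀ u ∈ S, G.Adj u v ∨ u = v) :
    PartiteCoverProperty r Prod.fst (myE G c) k := by
  intro S hSE hScard
  classical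
  have hSfin : S.Finite := Set.Finite.subset (Set.finite_range _) hSE
  -- choice of representatives
  have hrep : ∀ s ∈ S, ∃ v : VG, myEdge G c v = s := fun s hs => hSE hs
  set g : Set (Fin r × VG) → VG := fun s =>
    if h : ∃ v : VG, myEdge G c v = s then h.choose else Classical.arbitrary VG with hg
  have hgspec : ∀ s ∈ S, myEdge G c (g s) = s := by
    intro s hs
    have h := hrep s hs
    simp only [hg, dif_pos h]
    exact h.choose_spec
  set F : Finset VG := hSfin.toFinset.image g with hF
  have hFcard : F.card ≤ k := by
    calc F.card ≤ hSfin.toFinset.card := Finset.card_image_le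
      _ = S.ncard := (Set.ncard_eq_toFinset_card S hSfin).symm
      _ ≤ k := hScard
  obtain ⟨w, hw⟩ := hG F hFcard
  refine ⟨myEdge G c w, ?_, myEdge_self_transversal G c w⟩
  intro s hs
  have h1 : myEdge G c (g s) = s := hgspec s hs
  have h2 : g s ∈ F := Finset.mem_image_of_mem g (hSfin.mem_toFinset.mpr hs)
  have := myEdge_meets G c hr (hw (g s) h2)
  rw [h1] at this
  exact this

end Aux

/-- if every `r`-partite `r`-graph with the `(r,k)`-cover property has
cover number at most `m`, and in `G` every set of at most `k` vertices has a common
closed neighbour, then every `r`-colouring of `G` admits a cover by at most `m`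
monochromatic components; moreover, if every such hypergraph has a transversal cover,
then `V(G)` can be covered by monochromatic components of pairwise distinct colours. -/
theorem stmt3 {VG : Type} [Fintype VG] [Nonempty VG] (r k m : ℕ)
    (hr : 2 ≤ r) (hk : r < k) (hm : 1 ≤ m)
    (hhyp : ∀ (W : Type) [Fintype W] (part : W → Fin r) (E : Set (Set W)),
      IsPartite r part E → PartiteCoverProperty r part E k → coverNumber E ≤ m)
    (G : SimpleGraph VG)
    (hG : ∀ S : Finset VG, S.card ≤ k → ∃ v : VG, ∀ u ∈ S, G.Adj u v ∨ u = v) :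
    (∀ c : Sym2 VG → Fin r,
      ∃ S : Finset (Fin r × VG), S.card ≤ m ∧
        ∀ v : VG, ∃ p ∈ S, (colorSubgraph G c p.1).Reachable p.2 v) ∧
    ((∀ (W : Type) [Fintype W] (part : W → Fin r) (E : Set (Set W)),
        IsPartite r part E → PartiteCoverProperty r part E k →
          ∃ T : Set W, IsTransversalCover r part E T) →
      ∀ c : Sym2 VG → Fin r, ∃ f : Fin r → VG,
        ∀ v : VG, ∃ i : Fin r, (colorSubgraph G c i).Reachable (f i) v) := by
  classical
  have hrpos : 0 < r := lt_of_lt_of_le (by norm_num) hr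
  constructor
  · intro c
    have hcov := hhyp (Fin r × VG) Prod.fst (myE G c) (myE_partite G c)
      (myE_coverProp G c hrpos k hG)
    -- extract a cover of size sInf
    have hne : {n | ∃ T : Set (Fin r × VG), T.ncard = n ∧ IsCover (myE G c) T}.Nonempty := by
      refine ⟨(Set.univ : Set (Fin r × VG)).ncard, Set.univ, rfl, ?_⟩
      rintro e ⟨v, rfl⟩
      exact ⟨(⟨0, hrpos⟩, myRep G c ⟨0, hrpos⟩ v), ⟨_, rfl⟩, trivial⟩
    obtain ⟨T, hTcard, hTcov⟩ := Nat.sInf_mem hne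
    have hTfin : T.Finite := Set.toFinite T
    refine ⟨hTfin.toFinset, ?_, ?_⟩
    · rw [← Set.ncard_eq_toFinset_card T hTfin, hTcard]; exact hcov
    · intro v
      obtain ⟨⟨i, u⟩, hmem, hT⟩ := hTcov (myEdge G c v) ⟨v, rfl⟩
      obtain ⟨j, hj⟩ := hmem
      simp only [Prod.mk.injEq] at hj
      obtain ⟨rfl, rfl⟩ := hj
      exact ⟨(j, myRep G c j v), hTfin.mem_toFinset.mpr hT, myRep_reachable G c j v⟩
  · intro htrans c
    obtain ⟨T, hTcov, hTpart⟩ := htrans (Fin r × VG) Prod.fst (myE G c)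
      (myE_partite G c) (myE_coverProp G c hrpos k hG)
    have hsing : ∀ i : Fin r, ∃ a : Fin r × VG, T ∩ Prod.fst ⁻¹' {i} = {a} := by
      intro i
      exact Set.ncard_eq_one.mp (hTpart i)
    choose a ha using hsing
    refine ⟨fun i => (a i).2, ?_⟩
    intro v
    obtain ⟨⟨i, u⟩, hmem, hT⟩ := hTcov (myEdge G c v) ⟨v, rfl⟩
    obtain ⟨j, hj⟩ := hmem
    simp only [Prod.mk.injEq] at hj
    obtain ⟨rfl, rfl⟩ := hj
    have : (j, myRep G c j v) ∈ T ∩ Prod.fst ⁻¹' {j} := ⟨hT, rfl⟩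
    rw [ha j] at this
    refine ⟨j, ?_⟩
    have h2 : (a j).2 = myRep G c j v := by rw [← this]
    show (colorSubgraph G c j).Reachable (a j).2 v
    rw [h2]
    exact myRep_reachable G c j v
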